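/- Let D be a V_ℝ-chamber defined by a finite set F ⊂ V* \ {0} with pairwise distinct half-spaces H_f. Then f₀ ∈ F defines a wall of D if and only if there exists x ∈ V with f₀(x) < 0 and f(x) ≥ 0 for all f ∈ F \ {f₀}. -/
import Mathlib

def E (n : ℕ) (f : Fin n → ℚ) (x : Fin n → ℝ) : ℝ := ∑ i, (f i : ℝ) * x i

variable {n : ℕ}

lemma E_cont (f : Fin n → ℚ) : Continuous (E n f) := by
  unfold E
  exact continuous_finset_sum _ fun i _ => (continuous_const.mul (continuous_apply i))

lemma E_line (f : Fin n → ℚ) (t : ℝ) (x y : Fin n → ℝ) :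
    E n f (fun i => x i + t * y i) = E n f x + t * E n f y := by
  unfold E
  rw [Finset.mul_sum, ← Finset.sum_add_distrib]
  congr 1; funext i; ring

lemma E_scale (f : Fin n → ℚ) (t : ℝ) (x : Fin n → ℝ) :
    E n f (fun i => t * x i) = t * E n f x := by
  unfold E
  rw [Finset.mul_sum]
  congr 1; funext i; ring

lemma E_single (f : Fin n → ℚ) (i₀ : Fin n) (c : ℝ) :
    E n f (fun j => if j = i₀ then c else 0) = (f i₀ : ℝ) * c := by
  unfold E
  rw [Finset.sum_eq_single i₀]
  · simp
  · intro b _ hb; simp [hb]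
  · simp

lemma E_sum {β : Type*} (f : Fin n → ℚ) (s : Finset β) (y : β → Fin n → ℝ) :
    E n f (fun i => ∑ g ∈ s, y g i) = ∑ g ∈ s, E n f (y g) := by
  unfold E
  rw [Finset.sum_comm]
  congr 1; funext i; rw [Finset.mul_sum]

lemma E_qsmul (c : ℚ) (f : Fin n → ℚ) (x : Fin n → ℝ) :
    E n (c • f) x = (c : ℝ) * E n f x := by
  unfold E
  rw [Finset.mul_sum]
  congr 1; funext i; simp [Pi.smul_apply]; ring

lemma interior_pos (f : Fin n → ℚ) (hf : f ≠ 0) (U : Set (Fin n → ℝ)) (hU : IsOpen U)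
    (p : Fin n → ℝ) (hp : p ∈ U) (hpos : ∀ y ∈ U, 0 ≤ E n f y) : 0 < E n f p := by
  by_contra h
  push_neg at h
  obtain ⟨i₀, hi₀⟩ : ∃ i, f i ≠ 0 := Function.ne_iff.mp hf
  obtain ⟨r, hr, hball⟩ := Metric.isOpen_iff.mp hU p hp
  set a : ℝ := (f i₀ : ℝ) with ha
  have hane : a ≠ 0 := by show (f i₀:ℝ) ≠ 0; exact_mod_cast hi₀
  have ha2 : 0 < a ^ 2 := by positivity
  set t : ℝ := -(r / (2 * (|a| + 1))) with ht
  have htneg : t < 0 := by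
    rw [ht]; exact neg_lt_zero.mpr (by positivity)
  set y : Fin n → ℝ := fun j => p j + t * (if j = i₀ then a else 0) with hy
  have hyball : y ∈ Metric.ball p r := by
    rw [Metric.mem_ball, dist_pi_lt_iff hr]
    intro b
    rw [Real.dist_eq, hy]
    simp only [add_sub_cancel_left]
    rcases eq_or_ne b i₀ with hb | hb
    · subst hb
      rw [if_pos rfl, abs_mul, ht, abs_neg,
        abs_of_pos (show (0:ℝ) < r / (2 * (|a| + 1)) by positivity),
        div_mul_eq_mul_div, div_lt_iff₀ (by positivity)]
      nlinarith [abs_nonneg a, mul_nonneg hr.le (abs_nonneg a)]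
    · simp [hb, hr]
  have hEy : E n f y = E n f p + t * a ^ 2 := by
    rw [hy, E_line, E_single]; ring
  have := hpos y (hball hyball)
  nlinarith

lemma ker_mult (f₀ f : Fin n → ℚ) (i₀ : Fin n) (hi₀ : f₀ i₀ ≠ 0)
    (hker : ∀ w : Fin n → ℝ, E n f₀ w = 0 → E n f w = 0) :
    ∃ c : ℚ, f = c • f₀ := by
  refine ⟨f i₀ / f₀ i₀, funext fun i => ?_⟩
  set w : Fin n → ℝ := fun j =>
    (f₀ i₀ : ℝ) * (if j = i then 1 else 0) + (-(f₀ i : ℝ)) * (if j = i₀ then 1 else 0) with hw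
  have h1 : ∀ g : Fin n → ℚ, E n g w = (f₀ i₀ : ℝ) * (g i : ℝ) - (f₀ i : ℝ) * (g i₀ : ℝ) := by
    intro g
    have : E n g w = E n g (fun j => (fun j => (f₀ i₀ : ℝ) * (if j = i then 1 else 0)) j
        + (-(f₀ i : ℝ)) * ((fun j => (if j = i₀ then 1 else 0) : Fin n → ℝ) j)) := rfl
    rw [this, E_line]
    have h2 : E n g (fun j => (f₀ i₀ : ℝ) * (if j = i then 1 else 0)) = (f₀ i₀:ℝ) * (g i:ℝ) := by
      rw [E_scale]
      have := E_single g i (1:ℝ)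
      simp only [this]; ring
    have h3 : E n g (fun j => (if j = i₀ then (1:ℝ) else 0)) = (g i₀ : ℝ) := by
      have := E_single g i₀ (1:ℝ); simpa using this
    rw [h2, h3]; ring
  have hw0 : E n f₀ w = 0 := by rw [h1]; ring
  have hfw := hker w hw0
  rw [h1] at hfw
  have hq : f₀ i₀ * f i - f₀ i * f i₀ = 0 := by exact_mod_cast hfw
  have : ((f i₀ / f₀ i₀) • f₀) i = f i₀ / f₀ i₀ * f₀ i := rfl
  rw [this]
  field_simp
  linarith [hq]

/-- let D = ⋂_{f ∈ F} H_f be a V_ℝ-chamber defined by a finite set F of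
nonzero rational linear forms with pairwise distinct half-spaces H_f.  Then f₀ ∈ F
defines a wall of D iff there exists a rational point x with f₀(x) < 0 and f(x) ≥ 0
for all f ∈ F \ {f₀}.  Linear forms are given by coefficient vectors in Fin n → ℚ,
evaluated on V_ℝ = Fin n → ℝ. -/
theorem stmt18 (n : ℕ) (F : Finset (Fin n → ℚ))
    (hne : ∀ f ∈ F, f ≠ 0)
    (ev : (Fin n → ℚ) → (Fin n → ℝ) → ℝ)
    (hev : ∀ f x, ev f x = ∑ i, (f i : ℝ) * x i)
    (hdist : ∀ f ∈ F, ∀ f' ∈ F, f ≠ f' →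
      {x : Fin n → ℝ | 0 ≤ ev f x} ≠ {x : Fin n → ℝ | 0 ≤ ev f' x})
    (D : Set (Fin n → ℝ))
    (hD : D = {x | ∀ f ∈ F, 0 ≤ ev f x})
    -- D is a chamber: it contains a nonempty open subset of V_ℝ
    (hchamber : ∃ U : Set (Fin n → ℝ), IsOpen U ∧ U.Nonempty ∧ U ⊆ D)
    (f₀ : Fin n → ℚ) (hf₀ : f₀ ∈ F) :
    -- f₀ defines a wall of D: D ⊆ H_{f₀} and D ∩ [f₀]⊥ contains a nonempty
    -- relatively open subset of the hyperplane [f₀]⊥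
    (D ⊆ {x | 0 ≤ ev f₀ x} ∧
      ∃ U : Set (Fin n → ℝ), IsOpen U ∧ (U ∩ {x | ev f₀ x = 0}).Nonempty ∧
        U ∩ {x | ev f₀ x = 0} ⊆ D) ↔
    ∃ x : Fin n → ℚ, ev f₀ (fun i => (x i : ℝ)) < 0 ∧
      ∀ f ∈ F, f ≠ f₀ → 0 ≤ ev f (fun i => (x i : ℝ)) := by
  have hevE : ev = E n := funext fun f => funext fun x => hev f x
  subst hevE
  subst hD
  obtain ⟨U₀, hU₀o, ⟨p, hp⟩, hU₀D⟩ := hchamber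
  have hppos : ∀ f ∈ F, 0 < E n f p := fun f hf =>
    interior_pos f (hne f hf) U₀ hU₀o p hp (fun y hy => hU₀D hy f hf)
  obtain ⟨i₀, hf₀i⟩ : ∃ i, f₀ i ≠ 0 := Function.ne_iff.mp (hne f₀ hf₀)
  have hO'o : IsOpen {x : Fin n → ℝ | ∀ f ∈ F.erase f₀, 0 < E n f x} := by
    have : {x : Fin n → ℝ | ∀ f ∈ F.erase f₀, 0 < E n f x}
        = ⋂ f ∈ F.erase f₀, {x | 0 < E n f x} := by ext x; simp [Set.mem_iInter]
    rw [this]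
    exact isOpen_biInter_finset fun f _ => isOpen_lt continuous_const (E_cont f)
  constructor
  · rintro ⟨-, U, hUo, ⟨z₀, hz₀U, (hz₀K : E n f₀ z₀ = 0)⟩, hsub⟩
    obtain ⟨r, hr, hball⟩ := Metric.isOpen_iff.mp hUo z₀ hz₀U
    -- Step 1: witnesses on the wall
    have hwit : ∀ f ∈ F.erase f₀, ∃ y, y ∈ Metric.ball z₀ r ∧ E n f₀ y = 0 ∧ 0 < E n f y := by
      intro f hf
      obtain ⟨hff₀, hfF⟩ := Finset.mem_erase.mp hf
      by_contra hcon
      push_neg at hcon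
      have hzero : ∀ y ∈ Metric.ball z₀ r, E n f₀ y = 0 → E n f y = 0 := by
        intro y hy hy0
        have h1 := hcon y hy hy0
        have h2 : 0 ≤ E n f y := hsub ⟨hball hy, hy0⟩ f hfF
        linarith
      have hker : ∀ w : Fin n → ℝ, E n f₀ w = 0 → E n f w = 0 := by
        intro w hw
        set t : ℝ := r / (2 * (‖w‖ + 1)) with htd
        have ht : 0 < t := by positivity
        have htw : t * ‖w‖ < r := by
          rw [htd, div_mul_eq_mul_div, div_lt_iff₀ (by positivity)]
          nlinarith [norm_nonneg w]
        have hmem : (fun i => z₀ i + t * w i) ∈ Metric.ball z₀ r := by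
          rw [Metric.mem_ball, dist_pi_lt_iff hr]
          intro b
          rw [Real.dist_eq]
          simp only [add_sub_cancel_left]
          rw [abs_mul, abs_of_pos ht]
          have hwb : |w b| ≤ ‖w‖ := by
            simpa [Real.norm_eq_abs] using norm_le_pi_norm w b
          calc t * |w b| ≤ t * ‖w‖ := by nlinarith
            _ < r := htw
        have h0 : E n f₀ (fun i => z₀ i + t * w i) = 0 := by
          rw [E_line, hz₀K, hw]; ring
        have hz0f : E n f z₀ = 0 := hzero z₀ (Metric.mem_ball_self hr) hz₀K
        have hzt := hzero _ hmem h0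
        rw [E_line, hz0f, zero_add] at hzt
        exact (mul_eq_zero.mp hzt).resolve_left ht.ne'
      obtain ⟨c, hc⟩ := ker_mult f₀ f i₀ hf₀i hker
      rcases lt_trichotomy c 0 with hc0 | hc0 | hc0
      · have h1 : E n f p = (c : ℝ) * E n f₀ p := by rw [hc, E_qsmul]
        have h2 := hppos f hfF
        have h3 := hppos f₀ hf₀
        have h4 : (c : ℝ) < 0 := by exact_mod_cast hc0
        nlinarith
      · exact hne f hfF (by simp [hc, hc0])
      · apply hdist f hfF f₀ hf₀ hff₀
        ext x
        simp only [Set.mem_setOf_eq]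
        rw [hc, E_qsmul]
        have h4 : (0 : ℝ) < (c : ℝ) := by exact_mod_cast hc0
        constructor
        · intro h; nlinarith
        · intro h; positivity
    -- Step 2: a wall point where all other forms are positive
    have hzex : ∃ z, E n f₀ z = 0 ∧ ∀ f ∈ F.erase f₀, 0 < E n f z := by
      rcases (F.erase f₀).eq_empty_or_nonempty with hFe | hFe
      · exact ⟨z₀, hz₀K, by simp [hFe]⟩
      · choose! y hy1 hy2 hy3 using hwit
        set s := F.erase f₀ with hs
        have hN : 0 < ((s.card : ℝ)) := by
          exact_mod_cast Finset.card_pos.mpr hFe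
        set z : Fin n → ℝ := fun i => (s.card : ℝ)⁻¹ * ∑ f ∈ s, y f i with hz
        have hz_sum : ∀ h : Fin n → ℚ,
            E n h z = (s.card : ℝ)⁻¹ * ∑ f ∈ s, E n h (y f) := by
          intro h
          have h1 : z = fun i => (s.card : ℝ)⁻¹ * ((fun i => ∑ f ∈ s, y f i) i) := rfl
          rw [h1, E_scale, E_sum]
        have hyD : ∀ f' ∈ s, ∀ f ∈ F, 0 ≤ E n f (y f') := by
          intro f' hf' f hf
          exact hsub ⟨hball (hy1 f' hf'), hy2 f' hf'⟩ f hf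
        refine ⟨z, ?_, ?_⟩
        · rw [hz_sum]
          have : ∑ f ∈ s, E n f₀ (y f) = 0 :=
            Finset.sum_eq_zero fun f hf => hy2 f hf
          rw [this, mul_zero]
        · intro f hf
          rw [hz_sum]
          have hpos : 0 < ∑ f' ∈ s, E n f (y f') := by
            apply Finset.sum_pos' (fun f' hf' => hyD f' hf' f (Finset.mem_erase.mp hf).2)
            exact ⟨f, hf, hy3 f hf⟩
          positivity
    obtain ⟨z, hzK, hzpos⟩ := hzex
    -- Step 3: perturb off the wall
    obtain ⟨δ, hδ, hδball⟩ := Metric.isOpen_iff.mp hO'o z hzpos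
    set t : ℝ := if 0 < (f₀ i₀ : ℝ) then -(δ/2) else δ/2 with htd
    have hta : |t| = δ/2 := by
      rcases le_or_gt (f₀ i₀ : ℝ) 0 with h | h
      · rw [htd, if_neg (not_lt.mpr h), abs_of_pos (by positivity)]
      · rw [htd, if_pos h, abs_neg, abs_of_pos (by positivity)]
    set x' : Fin n → ℝ := fun j => z j + t * (if j = i₀ then 1 else 0) with hx'
    have hx'E : ∀ g : Fin n → ℚ, E n g x' = E n g z + t * (g i₀ : ℝ) := by
      intro g
      rw [hx', E_line]
      have := E_single g i₀ (1:ℝ)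
      rw [this, mul_one]
    have hx'0 : E n f₀ x' < 0 := by
      rw [hx'E, hzK, zero_add]
      have hne0 : (f₀ i₀ : ℝ) ≠ 0 := by exact_mod_cast hf₀i
      rcases lt_or_gt_of_ne hne0 with h | h
      · rw [htd, if_neg (not_lt.mpr h.le)]; nlinarith
      · rw [htd, if_pos h]; nlinarith
    have hx'ball : x' ∈ Metric.ball z δ := by
      rw [Metric.mem_ball, dist_pi_lt_iff hδ]
      intro b
      rw [Real.dist_eq, hx']
      simp only [add_sub_cancel_left]
      rw [abs_mul]
      rcases eq_or_ne b i₀ with hb | hb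
      · rw [if_pos hb, abs_one, mul_one, hta]; linarith
      · rw [if_neg hb, abs_zero, mul_zero]; linarith
    have hx'O : ∀ f ∈ F.erase f₀, 0 < E n f x' := hδball hx'ball
    -- Step 4: rationalize
    have hOo : IsOpen {x : Fin n → ℝ | E n f₀ x < 0 ∧ ∀ f ∈ F.erase f₀, 0 < E n f x} := by
      exact (isOpen_lt (E_cont f₀) continuous_const).inter hO'o
    obtain ⟨ρ, hρ, hρball⟩ := Metric.isOpen_iff.mp hOo x' ⟨hx'0, hx'O⟩
    have hqex : ∀ i, ∃ q : ℚ, |x' i - (q : ℝ)| < ρ := fun i => exists_rat_near (x' i) hρ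
    choose q hq using hqex
    have hmem : (fun i => (q i : ℝ)) ∈ Metric.ball x' ρ := by
      rw [Metric.mem_ball, dist_pi_lt_iff hρ]
      intro b
      rw [Real.dist_eq, abs_sub_comm]
      exact hq b
    obtain ⟨hq0, hqF⟩ := hρball hmem
    exact ⟨q, hq0, fun f hf hne' =>
      le_of_lt (hqF f (Finset.mem_erase.mpr ⟨hne', hf⟩))⟩
  · rintro ⟨x, hx0, hxF⟩
    set xr : Fin n → ℝ := fun i => (x i : ℝ) with hxr
    have hq0 : 0 < E n f₀ p := hppos f₀ hf₀
    have hden : 0 < E n f₀ p - E n f₀ xr := by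
      have : E n f₀ xr < 0 := hx0
      linarith
    set t : ℝ := E n f₀ p / (E n f₀ p - E n f₀ xr) with htd
    have ht0 : 0 < t := by positivity
    have ht1 : t < 1 := by
      rw [htd, div_lt_one hden]
      have : E n f₀ xr < 0 := hx0
      linarith
    set z : Fin n → ℝ := fun i => p i + t * (xr i - p i) with hz
    have hsubE : ∀ g : Fin n → ℚ,
        E n g (fun i => xr i - p i) = E n g xr - E n g p := by
      intro g
      have h1 : (fun i => xr i - p i) = fun i => xr i + (-1) * p i := by
        funext i; ring
      rw [h1, E_line]; ring
    have hEz : ∀ g : Fin n → ℚ, E n g z = E n g p + t * (E n g xr - E n g p) := by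
      intro g
      rw [hz, E_line, hsubE]
    have hEz0 : E n f₀ z = 0 := by
      rw [hEz, htd]
      field_simp
      ring
    refine ⟨fun y hy => hy f₀ hf₀,
      {x | ∀ f ∈ F.erase f₀, 0 < E n f x}, hO'o, ⟨z, ?_, hEz0⟩, ?_⟩
    · intro f hf
      obtain ⟨hff₀, hfF⟩ := Finset.mem_erase.mp hf
      rw [hEz]
      have h1 := hppos f hfF
      have h2 : 0 ≤ E n f xr := hxF f hfF hff₀
      nlinarith
    · rintro y ⟨hy1, hy2⟩ f hf
      rcases eq_or_ne f f₀ with hf' | hf'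
      · subst hf'
        exact le_of_eq (Set.mem_setOf_eq ▸ hy2).symm
      · exact le_of_lt (hy1 f (Finset.mem_erase.mpr ⟨hf', hf⟩))
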